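/- Positive measure of certifying directions: let g_0, g_1, …, g_m be nonzero polynomials in n real variables (n ≥ 2) with degrees p_i := totalDegree(g_i), and define D* := {d on the unit sphere S^{n−1} ⊆ ℝ^n : for every i ∈ {0,…,m} there exists μ ≥ 1 with φ_{i,μ}(d) < 0 and φ_{i,k}(d) = 0 for all k > μ}. Suppose there exists d_0 ∈ D* with φ_{i,p_i}(d_0) < 0 for every i ∈ {0,…,m}. Then D* has positive (n−1)-dimensional Hausdorff measure: ℋ^{n−1}(D*) > 0. -/

import Mathlib

open MvPolynomial MeasureTheory RealInnerProductSpace ENNReal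

set_option maxHeartbeats 2000000 in
theorem stmt_12 (n m : ℕ) (hn : 2 ≤ n) (g : Fin (m + 1) → MvPolynomial (Fin n) ℝ)
    (hg : ∀ i, g i ≠ 0)
    (Dstar : Set (EuclideanSpace ℝ (Fin n)))
    (hDstar : Dstar = {d : EuclideanSpace ℝ (Fin n) | ‖d‖ = 1 ∧
      ∀ i : Fin (m + 1), ∃ μ : ℕ, 1 ≤ μ ∧
        MvPolynomial.eval (d : Fin n → ℝ) (MvPolynomial.homogeneousComponent μ (g i)) < 0 ∧
        ∀ k, μ < k →
          MvPolynomial.eval (d : Fin n → ℝ) (MvPolynomial.homogeneousComponent k (g i)) = 0})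
    (hex : ∃ d₀ ∈ Dstar, ∀ i : Fin (m + 1),
      MvPolynomial.eval (d₀ : Fin n → ℝ)
        (MvPolynomial.homogeneousComponent (g i).totalDegree (g i)) < 0) :
    0 < μH[(n : ℝ) - 1] Dstar := by
  classical
  obtain ⟨d₀, hd₀D, hd₀⟩ := hex
  rw [hDstar] at hd₀D
  obtain ⟨hnorm, hall⟩ := hd₀D
  -- each totalDegree is ≥ 1
  have hp : ∀ i, 1 ≤ (g i).totalDegree := by
    intro i
    obtain ⟨μ, hμ1, hμneg, -⟩ := hall i
    by_contra h
    push_neg at h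
    have h0 : (g i).totalDegree < μ := lt_of_lt_of_le h hμ1
    rw [homogeneousComponent_eq_zero _ _ h0] at hμneg
    simp at hμneg
  -- the open set W
  set W : Set (EuclideanSpace ℝ (Fin n)) :=
    {x | ∀ i, MvPolynomial.eval (x : Fin n → ℝ)
      (MvPolynomial.homogeneousComponent ((g i).totalDegree) (g i)) < 0} with hW
  have hWopen : IsOpen W := by
    have : W = ⋂ i, (fun x : EuclideanSpace ℝ (Fin n) =>
        MvPolynomial.eval (x : Fin n → ℝ)
          (MvPolynomial.homogeneousComponent ((g i).totalDegree) (g i))) ⁻¹' Set.Iio 0 := by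
      ext x; simp [hW]
    rw [this]
    refine isOpen_iInter_of_finite fun i => IsOpen.preimage ?_ isOpen_Iio
    exact (MvPolynomial.continuous_eval _).comp (EuclideanSpace.equiv (Fin n) ℝ).continuous
  have hd₀W : d₀ ∈ W := fun i => hd₀ i
  -- sphere ∩ W ⊆ Dstar
  have hsub : Metric.sphere (0 : EuclideanSpace ℝ (Fin n)) 1 ∩ W ⊆ Dstar := by
    rintro x ⟨hx1, hx2⟩
    rw [hDstar]
    refine ⟨by simpa using hx1, fun i => ⟨(g i).totalDegree, hp i, hx2 i, fun k hk => ?_⟩⟩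
    rw [homogeneousComponent_eq_zero _ _ hk]
    simp
  -- set up the hyperplane
  have hd₀ne : d₀ ≠ 0 := by
    intro h; rw [h] at hnorm; simp at hnorm
  set K : Submodule ℝ (EuclideanSpace ℝ (Fin n)) := (ℝ ∙ d₀)ᗮ with hK
  have hfinrank : Module.finrank ℝ K = n - 1 := by
    refine Submodule.finrank_add_finrank_orthogonal' ?_
    rw [finrank_span_singleton hd₀ne, finrank_euclideanSpace_fin]
    omega
  -- the map f : K → E, y ↦ y + sqrt(1-‖y‖²) • d₀
  set f : K → EuclideanSpace ℝ (Fin n) :=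
    fun y => (y : EuclideanSpace ℝ (Fin n)) + Real.sqrt (1 - ‖y‖ ^ 2) • d₀ with hf
  have hf0 : f 0 = d₀ := by simp [hf]
  have hfc : Continuous f := by
    apply Continuous.add continuous_subtype_val
    exact (Real.continuous_sqrt.comp (by fun_prop)).smul continuous_const
  obtain ⟨ε, hε, hball⟩ : ∃ ε > 0, Metric.ball (0 : K) ε ⊆ f ⁻¹' W := by
    have : f ⁻¹' W ∈ nhds (0 : K) := by
      refine hfc.continuousAt.preimage_mem_nhds ?_
      rw [hf0]
      exact hWopen.mem_nhds hd₀W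
    rcases Metric.mem_nhds_iff.mp this with ⟨ε, hε, h⟩
    exact ⟨ε, hε, h⟩
  set δ : ℝ := min ε 1 with hδ
  have hδpos : 0 < δ := lt_min hε one_pos
  -- for y in ball 0 δ, f y is in sphere ∩ W
  have hmem : ∀ y : K, ‖y‖ < δ → f y ∈ Metric.sphere (0 : EuclideanSpace ℝ (Fin n)) 1 ∩ W := by
    intro y hy
    have hy1 : ‖y‖ < 1 := lt_of_lt_of_le hy (min_le_right _ _)
    have hyε : ‖y‖ < ε := lt_of_lt_of_le hy (min_le_left _ _)
    constructor
    · have horth : (inner ℝ (y : EuclideanSpace ℝ (Fin n)) (Real.sqrt (1 - ‖y‖ ^ 2) • d₀) : ℝ) = 0 := by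
        rw [real_inner_smul_right]
        have : (inner ℝ (y : EuclideanSpace ℝ (Fin n)) d₀ : ℝ) = 0 := by
          have h2 := (Submodule.mem_orthogonal (ℝ ∙ d₀) (y : EuclideanSpace ℝ (Fin n))).mp
            y.2 d₀ (Submodule.mem_span_singleton_self d₀)
          rwa [real_inner_comm] at h2
        rw [this, mul_zero]
      have hsq : ‖f y‖ ^ 2 = 1 := by
        have hfy : f y = (y : EuclideanSpace ℝ (Fin n)) + Real.sqrt (1 - ‖y‖ ^ 2) • d₀ := rfl
        rw [hfy, sq]
        rw [norm_add_sq_eq_norm_sq_add_norm_sq_real horth]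
        rw [norm_smul, Real.norm_eq_abs, abs_of_nonneg (Real.sqrt_nonneg _)]
        rw [← sq, ← sq, mul_pow, Real.sq_sqrt (by nlinarith [norm_nonneg (y : K)]), hnorm]
        have : ‖(y : EuclideanSpace ℝ (Fin n))‖ = ‖y‖ := rfl
        rw [this]; ring
      have : ‖f y‖ = 1 := by
        nlinarith [norm_nonneg (f y)]
      simpa using this
    · exact hball (by simpa using hyε)
  -- projection
  set P : EuclideanSpace ℝ (Fin n) →L[ℝ] K := K.orthogonalProjectionOnto with hP
  have hPf : ∀ y : K, ‖y‖ < δ → P (f y) = y := by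
    intro y hy
    have hfy : f y = (y : EuclideanSpace ℝ (Fin n)) + Real.sqrt (1 - ‖y‖ ^ 2) • d₀ := rfl
    rw [hfy]
    have h1 : P (y : EuclideanSpace ℝ (Fin n)) = y :=
      Submodule.orthogonalProjectionOnto_mem_subspace_eq_self y
    have h2 : P d₀ = 0 := by
      rw [hP, Submodule.orthogonalProjectionOnto_eq_zero_iff]
      exact (Submodule.le_orthogonal_orthogonal _) (Submodule.mem_span_singleton_self d₀)
    rw [map_add, P.map_smul, h1, h2, smul_zero, add_zero]
  have himg : Metric.ball (0 : K) δ ⊆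
      P '' (Metric.sphere (0 : EuclideanSpace ℝ (Fin n)) 1 ∩ W) := by
    intro y hy
    rw [Metric.mem_ball, dist_zero_right] at hy
    exact ⟨f y, hmem y hy, hPf y hy⟩
  -- Lipschitz bound
  have hd0 : (0 : ℝ) ≤ (n : ℝ) - 1 := by
    have : (2 : ℝ) ≤ (n : ℝ) := by exact_mod_cast hn
    linarith
  have hPlip : LipschitzWith 1 P := by
    have := P.lipschitz
    refine this.weaken ?_
    rw [← NNReal.coe_le_coe]
    exact_mod_cast Submodule.orthogonalProjectionOnto_norm_le K
  have hchain : μH[(n : ℝ) - 1] (Metric.ball (0 : K) δ) ≤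
      μH[(n : ℝ) - 1] (Metric.sphere (0 : EuclideanSpace ℝ (Fin n)) 1 ∩ W) := by
    refine le_trans (measure_mono himg) ?_
    have h := hPlip.hausdorffMeasure_image_le hd0
      (Metric.sphere (0 : EuclideanSpace ℝ (Fin n)) 1 ∩ W)
    simpa using h
  -- positivity of Hausdorff measure of the ball in K
  have hcast : ((Module.finrank ℝ K : ℝ)) = (n : ℝ) - 1 := by
    rw [hfinrank]
    have : (1 : ℕ) ≤ n := by omega
    push_cast [Nat.cast_sub this]
    ring
  have hballpos : 0 < μH[(n : ℝ) - 1] (Metric.ball (0 : K) δ) := by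
    rw [← hcast]
    have : Measure.IsAddHaarMeasure (μH[(Module.finrank ℝ ↥K : ℝ)] : Measure K) := by
      exact_mod_cast MeasureTheory.isAddHaarMeasure_hausdorffMeasure
    exact Metric.isOpen_ball.measure_pos _ ⟨0, Metric.mem_ball_self hδpos⟩
  calc (0 : ℝ≥0∞) < μH[(n : ℝ) - 1] (Metric.ball (0 : K) δ) := hballpos
    _ ≤ μH[(n : ℝ) - 1] (Metric.sphere (0 : EuclideanSpace ℝ (Fin n)) 1 ∩ W) := hchain
    _ ≤ μH[(n : ℝ) - 1] Dstar := measure_mono hsub
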